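/- arXiv:1302.4650 — 2 statements merged into one kernel-verified Lean document; each statement's English description precedes it below -/
import Mathlib

section
/- Let K be a number field of degree 2 over ℚ with ring of integers O_K. Let χ : ℕ → ℤ be a function satisfying χ(1) = 1, χ(m·n) = χ(m)·χ(n) for all m, n (complete multiplicativity), and, for every prime p: χ(p) = 1 if p splits in K, χ(p) = 0 if p ramifies in K, and χ(p) = −1 if p is inert in K. Then for every positive integer N, the set of nonzero ideals I of O_K with absolute norm N(I) = N is finite, and its cardinality ρ(N) equals Σ_{d ∣ N} χ(d), the sum of χ(d) over the positive divisors d of N. -/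
open NumberField

set_option linter.unusedSectionVars false
set_option synthInstance.maxHeartbeats 1000000
set_option maxHeartbeats 1000000

namespace QuadCharCount

open Ideal ArithmeticFunction

variable {K : Type*} [Field K] [NumberField K]

variable {K : Type*} [Field K] [NumberField K]

lemma auxQ_absNorm_natCast (n : ℕ) :
    Ideal.absNorm (Ideal.span {(n : 𝓞 K)}) = n ^ Module.finrank ℚ K := by
  have h1 : (n : 𝓞 K) = algebraMap ℤ (𝓞 K) (n : ℤ) := by simp
  rw [h1, Ideal.absNorm_span_singleton,
    Algebra.norm_algebraMap_of_basis (Module.Free.chooseBasis ℤ (𝓞 K)),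
    ← Module.finrank_eq_card_chooseBasisIndex, NumberField.RingOfIntegers.rank]
  rw [Int.natAbs_pow]
  simp

lemma auxQ_span_absNorm_le (I : Ideal (𝓞 K)) :
    Ideal.span {((Ideal.absNorm I : ℕ) : 𝓞 K)} ≤ I :=
  (Ideal.span_singleton_le_iff_mem I).mpr (Ideal.absNorm_mem I)

lemma auxQ_sup_span_eq_top {a b : ℕ} (hab : a.Coprime b) {I : Ideal (𝓞 K)}
    (hI : Ideal.absNorm I ∣ b) : I ⊔ Ideal.span {(a : 𝓞 K)} = ⊤ := by
  rw [← Ideal.absNorm_eq_one_iff]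
  have h1 : Ideal.absNorm (I ⊔ Ideal.span {(a : 𝓞 K)}) ∣ b :=
    dvd_trans (Ideal.absNorm_dvd_absNorm_of_le le_sup_left) hI
  have h2 : Ideal.absNorm (I ⊔ Ideal.span {(a : 𝓞 K)}) ∣ a ^ Module.finrank ℚ K := by
    rw [← auxQ_absNorm_natCast a]
    exact Ideal.absNorm_dvd_absNorm_of_le le_sup_right
  have hco : (a ^ Module.finrank ℚ K).Coprime b := hab.pow_left _
  exact Nat.dvd_one.mp (hco ▸ Nat.dvd_gcd h2 h1)

lemma auxQ_span_sup_span {a b : ℕ} (hab : a.Coprime b) :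
    Ideal.span {(a : 𝓞 K)} ⊔ Ideal.span {(b : 𝓞 K)} = ⊤ := by
  rw [Ideal.eq_top_iff_one]
  have hZ : (1 : ℤ) = a * Nat.gcdA a b + b * Nat.gcdB a b := by
    have := Nat.gcd_eq_gcd_ab a b
    rwa [hab, Nat.cast_one] at this
  have hK : (1 : 𝓞 K) = (a : 𝓞 K) * ((Nat.gcdA a b : ℤ) : 𝓞 K)
      + (b : 𝓞 K) * ((Nat.gcdB a b : ℤ) : 𝓞 K) := by
    have := congrArg (fun z : ℤ => ((z : ℤ) : 𝓞 K)) hZ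
    push_cast at this ⊢
    exact this
  rw [hK]
  exact Submodule.add_mem_sup
    (Ideal.mul_mem_right _ _ (Ideal.mem_span_singleton_self _))
    (Ideal.mul_mem_right _ _ (Ideal.mem_span_singleton_self _))

lemma auxQ_recover {a b : ℕ} (hab : a.Coprime b) {I J : Ideal (𝓞 K)}
    (hI : Ideal.absNorm I = a) (hJ : Ideal.absNorm J ∣ b) :
    I * J ⊔ Ideal.span {(a : 𝓞 K)} = I := by
  apply le_antisymm
  · refine sup_le Ideal.mul_le_left ?_
    have := auxQ_span_absNorm_le I
    rwa [hI] at this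
  · calc I = I * ⊤ := (Ideal.mul_top I).symm
      _ = I * (J ⊔ Ideal.span {(a : 𝓞 K)}) := by rw [auxQ_sup_span_eq_top hab hJ]
      _ = I * J ⊔ I * Ideal.span {(a : 𝓞 K)} := Ideal.mul_sup _ _ _
      _ ≤ I * J ⊔ Ideal.span {(a : 𝓞 K)} := sup_le_sup_left Ideal.mul_le_right _

lemma auxQ_decomp {a b : ℕ} (hab : a.Coprime b) (ha : 0 < a) (hb : 0 < b)
    {I : Ideal (𝓞 K)} (hI : Ideal.absNorm I = a * b) :
    Ideal.absNorm (I ⊔ Ideal.span {(a : 𝓞 K)}) = a ∧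
      Ideal.absNorm (I ⊔ Ideal.span {(b : 𝓞 K)}) = b ∧
      I = (I ⊔ Ideal.span {(a : 𝓞 K)}) * (I ⊔ Ideal.span {(b : 𝓞 K)}) := by
  have habK : ((a * b : ℕ) : 𝓞 K) = (a : 𝓞 K) * (b : 𝓞 K) := by push_cast; ring
  have hprod : (I ⊔ Ideal.span {(a : 𝓞 K)}) * (I ⊔ Ideal.span {(b : 𝓞 K)}) = I := by
    apply le_antisymm
    · rw [Ideal.sup_mul, Ideal.mul_sup, Ideal.mul_sup]
      have h4 : Ideal.span {(a : 𝓞 K)} * Ideal.span {(b : 𝓞 K)} ≤ I := by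
        rw [Ideal.span_singleton_mul_span_singleton, ← habK]
        have := auxQ_span_absNorm_le I
        rwa [hI] at this
      exact sup_le (sup_le Ideal.mul_le_left Ideal.mul_le_left)
        (sup_le Ideal.mul_le_right h4)
    · calc I = ⊤ * I := (Ideal.top_mul I).symm
        _ = (Ideal.span {(a : 𝓞 K)} ⊔ Ideal.span {(b : 𝓞 K)}) * I := by
            rw [auxQ_span_sup_span hab]
        _ = Ideal.span {(a : 𝓞 K)} * I ⊔ Ideal.span {(b : 𝓞 K)} * I := Ideal.sup_mul _ _ _
        _ ≤ (I ⊔ Ideal.span {(a : 𝓞 K)}) * (I ⊔ Ideal.span {(b : 𝓞 K)}) := by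
            refine sup_le (Ideal.mul_mono le_sup_right le_sup_left) ?_
            rw [mul_comm]
            exact Ideal.mul_mono le_sup_left le_sup_right
  set x := Ideal.absNorm (I ⊔ Ideal.span {(a : 𝓞 K)}) with hx
  set y := Ideal.absNorm (I ⊔ Ideal.span {(b : 𝓞 K)}) with hy
  have hxy : x * y = a * b := by
    rw [hx, hy, ← _root_.map_mul Ideal.absNorm, hprod, hI]
  have hxa : x ∣ a := by
    have h2 : x ∣ a ^ Module.finrank ℚ K := by
      rw [← auxQ_absNorm_natCast a]
      exact Ideal.absNorm_dvd_absNorm_of_le le_sup_right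
    have hcb : x.Coprime b := Nat.Coprime.coprime_dvd_left h2 (hab.pow_left _)
    exact hcb.dvd_of_dvd_mul_right ⟨y, hxy.symm⟩
  have hyb : y ∣ b := by
    have h2 : y ∣ b ^ Module.finrank ℚ K := by
      rw [← auxQ_absNorm_natCast b]
      exact Ideal.absNorm_dvd_absNorm_of_le le_sup_right
    have hca : y.Coprime a := Nat.Coprime.coprime_dvd_left h2 (hab.symm.pow_left _)
    exact hca.dvd_of_dvd_mul_right ⟨x, by rw [mul_comm] at hxy; rw [mul_comm b a]; exact hxy.symm⟩
  obtain ⟨c, hc⟩ := hxa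
  obtain ⟨d, hd⟩ := hyb
  have hxypos : 0 < x * y := by rw [hxy]; positivity
  have h1 : x * y * (c * d) = x * y * 1 := by
    rw [mul_one]
    conv_rhs => rw [hxy, hc, hd]
    ring
  have hcd : c * d = 1 := Nat.eq_of_mul_eq_mul_left hxypos h1
  have hc1 : c = 1 := Nat.dvd_one.mp (hcd ▸ dvd_mul_right c d)
  have hd1 : d = 1 := Nat.dvd_one.mp (hcd ▸ dvd_mul_left d c)
  refine ⟨?_, ?_, hprod.symm⟩
  · rw [hc, hc1, mul_one]
  · rw [hd, hd1, mul_one]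

lemma auxQ_ncard_mul {a b : ℕ} (hab : a.Coprime b) (ha : 0 < a) (hb : 0 < b) :
    {I : Ideal (𝓞 K) | Ideal.absNorm I = a * b}.ncard =
      {I : Ideal (𝓞 K) | Ideal.absNorm I = a}.ncard *
        {I : Ideal (𝓞 K) | Ideal.absNorm I = b}.ncard := by
  have hbij : Set.BijOn (fun p : Ideal (𝓞 K) × Ideal (𝓞 K) => p.1 * p.2)
      ({I : Ideal (𝓞 K) | Ideal.absNorm I = a} ×ˢ {I : Ideal (𝓞 K) | Ideal.absNorm I = b})
      {I : Ideal (𝓞 K) | Ideal.absNorm I = a * b} := by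
    refine ⟨fun p hp => ?_, fun p hp q hq heq => ?_, fun I hI => ?_⟩
    · simp only [Set.mem_setOf_eq, Set.mem_prod] at hp ⊢
      rw [_root_.map_mul Ideal.absNorm, hp.1, hp.2]
    · simp only [Set.mem_setOf_eq, Set.mem_prod] at hp hq
      simp only at heq
      have e1 : p.1 = q.1 := by
        rw [← auxQ_recover hab hp.1 (dvd_of_eq hp.2),
          ← auxQ_recover hab hq.1 (dvd_of_eq hq.2), heq]
      have e2 : p.2 = q.2 := by
        rw [← auxQ_recover hab.symm hp.2 (dvd_of_eq hp.1),
          ← auxQ_recover hab.symm hq.2 (dvd_of_eq hq.1), mul_comm p.2 p.1,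
          mul_comm q.2 q.1, heq]
      exact Prod.ext e1 e2
    · obtain ⟨h1, h2, h3⟩ := auxQ_decomp hab ha hb hI
      exact ⟨(I ⊔ Ideal.span {(a : 𝓞 K)}, I ⊔ Ideal.span {(b : 𝓞 K)}), ⟨h1, h2⟩, h3.symm⟩
  rw [← hbij.image_eq, Set.ncard_image_of_injOn hbij.injOn,
    ← Nat.card_coe_set_eq, Nat.card_congr (Equiv.Set.prod _ _), Nat.card_prod,
    Nat.card_coe_set_eq, Nat.card_coe_set_eq]



variable {K : Type*} [Field K] [NumberField K]


lemma auxQ_dvd_of_norm_pp {p : ℕ} (k : ℕ) {I : Ideal (𝓞 K)} (hI : Ideal.absNorm I = p ^ k) :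
    I ∣ Ideal.span {(p : 𝓞 K)} ^ k := by
  rw [Ideal.dvd_iff_le, Ideal.span_singleton_pow]
  have h1 : ((p : 𝓞 K)) ^ k = ((p ^ k : ℕ) : 𝓞 K) := by push_cast; ring
  rw [h1, ← hI]
  exact (Ideal.span_singleton_le_iff_mem I).mpr (Ideal.absNorm_mem I)

/-- counting in the inert / ramified cases -/
lemma auxQ_count_one {p e f : ℕ} (hp : p.Prime) {P : Ideal (𝓞 K)} (hP : Prime P)
    (hfact : Ideal.span {(p : 𝓞 K)} = P ^ e) (hnorm : Ideal.absNorm P = p ^ f)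
    (hf : 0 < f) (k : ℕ) :
    {I : Ideal (𝓞 K) | Ideal.absNorm I = p ^ k}.ncard = if f ∣ k then 1 else 0 := by
  have hseteq : {I : Ideal (𝓞 K) | Ideal.absNorm I = p ^ k}
      = if f ∣ k then {P ^ (k / f)} else ∅ := by
    ext I
    simp only [Set.mem_setOf_eq]
    constructor
    · intro hI
      have hdvd : I ∣ P ^ (e * k) := by
        have := auxQ_dvd_of_norm_pp k hI
        rwa [hfact, ← pow_mul] at this
      obtain ⟨i, hik, hass⟩ := (dvd_prime_pow hP (e * k)).mp hdvd
      have hIeq : I = P ^ i := associated_iff_eq.mp hass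
      have hni : Ideal.absNorm I = p ^ (f * i) := by
        rw [hIeq, _root_.map_pow, hnorm, ← pow_mul]
      have hfi : f * i = k := by
        have := hni.symm.trans hI
        exact Nat.pow_right_injective hp.two_le this
      have hfk : f ∣ k := ⟨i, hfi.symm⟩
      rw [if_pos hfk]
      have : k / f = i := by rw [← hfi, Nat.mul_div_cancel_left i hf]
      rw [this]
      exact Set.mem_singleton_iff.mpr hIeq
    · intro hI
      by_cases hfk : f ∣ k
      · rw [if_pos hfk, Set.mem_singleton_iff] at hI
        rw [hI, _root_.map_pow, hnorm, ← pow_mul, Nat.mul_div_cancel' hfk]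
      · rw [if_neg hfk] at hI
        exact absurd hI (Set.notMem_empty I)
  rw [hseteq]
  by_cases hfk : f ∣ k
  · rw [if_pos hfk, if_pos hfk, Set.ncard_singleton]
  · rw [if_neg hfk, if_neg hfk, Set.ncard_empty]

lemma auxQ_dvd_mul_pow {P Q : Ideal (𝓞 K)} (hP : Prime P) (hQ : Prime Q) :
    ∀ (a : ℕ) (b : ℕ) (I : Ideal (𝓞 K)), I ∣ P ^ a * Q ^ b →
      ∃ i ≤ a, ∃ j ≤ b, I = P ^ i * Q ^ j := by
  intro a
  induction a with
  | zero =>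
    intro b I hI
    rw [pow_zero, one_mul] at hI
    obtain ⟨j, hjb, hass⟩ := (dvd_prime_pow hQ b).mp hI
    exact ⟨0, le_refl 0, j, hjb, by rw [pow_zero, one_mul]; exact associated_iff_eq.mp hass⟩
  | succ a ih =>
    intro b I hI
    by_cases hPd : P ∣ I
    · obtain ⟨I₂, rfl⟩ := hPd
      have h1 : P ^ (a + 1) * Q ^ b = P * (P ^ a * Q ^ b) := by ring
      rw [h1] at hI
      have h2 : I₂ ∣ P ^ a * Q ^ b := (mul_dvd_mul_iff_left hP.ne_zero).mp hI
      obtain ⟨i, hia, j, hjb, hIeq⟩ := ih b I₂ h2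
      exact ⟨i + 1, by omega, j, hjb, by rw [hIeq]; ring⟩
    · have hPprime : P.IsPrime := Ideal.isPrime_of_prime hP
      have hPmax : P.IsMaximal := hPprime.isMaximal hP.ne_zero
      have hsup : I ⊔ P = ⊤ := by
        by_contra hne
        have hle : P ≤ I ⊔ P := le_sup_right
        have : P = I ⊔ P := hPmax.eq_of_le hne hle
        exact hPd (Ideal.dvd_iff_le.mpr (this ▸ le_sup_left))
      have hcop : IsCoprime I (P ^ (a + 1)) :=
        (Ideal.isCoprime_iff_sup_eq.mpr hsup).pow_right
      have hIQ : I ∣ Q ^ b := hcop.dvd_of_dvd_mul_left hI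
      obtain ⟨j, hjb, hass⟩ := (dvd_prime_pow hQ b).mp hIQ
      exact ⟨0, Nat.zero_le _, j, hjb, by rw [pow_zero, one_mul]; exact associated_iff_eq.mp hass⟩

lemma auxQ_count_split {p : ℕ} (hp : p.Prime) {P Q : Ideal (𝓞 K)} (hP : Prime P) (hQ : Prime Q)
    (hPQ : P ≠ Q) (hfact : Ideal.span {(p : 𝓞 K)} = P * Q)
    (hnP : Ideal.absNorm P = p) (hnQ : Ideal.absNorm Q = p) (k : ℕ) :
    {I : Ideal (𝓞 K) | Ideal.absNorm I = p ^ k}.ncard = k + 1 := by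
  have hnormPQ : ∀ i j : ℕ, Ideal.absNorm (P ^ i * Q ^ j) = p ^ (i + j) := by
    intro i j
    rw [_root_.map_mul Ideal.absNorm, _root_.map_pow, _root_.map_pow, hnP, hnQ, ← pow_add]
  have hseteq : {I : Ideal (𝓞 K) | Ideal.absNorm I = p ^ k}
      = (fun i => P ^ i * Q ^ (k - i)) '' (Set.Iic k) := by
    ext I
    simp only [Set.mem_setOf_eq, Set.mem_image, Set.mem_Iic]
    constructor
    · intro hI
      have hdvd : I ∣ P ^ k * Q ^ k := by
        have := auxQ_dvd_of_norm_pp k hI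
        rwa [hfact, mul_pow] at this
      obtain ⟨i, hik, j, hjk, hIeq⟩ := auxQ_dvd_mul_pow hP hQ k k I hdvd
      have hij : i + j = k := by
        have hh : p ^ (i + j) = p ^ k := by rw [← hnormPQ i j, ← hIeq, hI]
        exact Nat.pow_right_injective hp.two_le hh
      exact ⟨i, by omega, by
        show P ^ i * Q ^ (k - i) = I
        rw [hIeq, show k - i = j from by omega]⟩
    · rintro ⟨i, hik, rfl⟩
      rw [hnormPQ]
      congr 1
      omega
  have hinj : Set.InjOn (fun i => P ^ i * Q ^ (k - i)) (Set.Iic k) := by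
    have key : ∀ i i' : ℕ, i ≤ k → i' ≤ k → i ≤ i' →
        P ^ i * Q ^ (k - i) = P ^ i' * Q ^ (k - i') → i = i' := by
      intro i i' hik hi'k hii' heq
      by_contra hne
      have hlt : i < i' := lt_of_le_of_ne hii' hne
      have h1 : P ^ i * Q ^ (k - i) = P ^ i * (P ^ (i' - i) * Q ^ (k - i')) := by
        rw [heq, ← mul_assoc, ← pow_add]
        congr 2
        omega
      have h2 : Q ^ (k - i) = P ^ (i' - i) * Q ^ (k - i') :=
        mul_left_cancel₀ (pow_ne_zero i hP.ne_zero) h1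
      have h3 : P ∣ Q ^ (k - i) := by
        rw [h2]
        exact Dvd.dvd.mul_right (dvd_pow_self P (by omega)) _
      have h4 : P ∣ Q := hP.dvd_of_dvd_pow h3
      exact hPQ (associated_iff_eq.mp (hP.associated_of_dvd hQ h4))
    intro i hi i' hi' heq
    simp only [Set.mem_Iic] at hi hi'
    rcases le_total i i' with h | h
    · exact key i i' hi hi' h heq
    · exact (key i' i hi' hi h heq.symm).symm
  rw [hseteq, Set.ncard_image_of_injOn hinj, ← Finset.coe_Iic, Set.ncard_coe_finset,
    Nat.card_Iic]

lemma auxQ_trichotomy (hdeg : Module.finrank ℚ K = 2) {p : ℕ} (hp : p.Prime) :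
    (∃ P Q : Ideal (𝓞 K), Prime P ∧ Prime Q ∧ P ≠ Q ∧
      Ideal.span {(p : 𝓞 K)} = P * Q ∧ Ideal.absNorm P = p ∧ Ideal.absNorm Q = p) ∨
    (∃ P : Ideal (𝓞 K), Prime P ∧ Ideal.span {(p : 𝓞 K)} = P ^ 2 ∧
      Ideal.absNorm P = p) ∨
    ((Ideal.span {(p : 𝓞 K)}).IsPrime ∧ Prime (Ideal.span {(p : 𝓞 K)}) ∧
      Ideal.absNorm (Ideal.span {(p : 𝓞 K)}) = p ^ 2) := by
  set J : Ideal (𝓞 K) := Ideal.span {(p : 𝓞 K)} with hJdef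
  have hJnorm : Ideal.absNorm J = p ^ 2 := by
    rw [hJdef, auxQ_absNorm_natCast p, hdeg]
  have hJtop : J ≠ ⊤ := by
    intro h
    rw [h, Ideal.absNorm_top] at hJnorm
    exact (Nat.one_lt_pow (by norm_num) hp.one_lt).ne' hJnorm.symm
  have hJbot : J ≠ ⊥ := by
    intro h
    rw [h, Ideal.absNorm_bot] at hJnorm
    exact (pow_ne_zero 2 hp.pos.ne') hJnorm.symm
  obtain ⟨P, hPmax, hle⟩ := Ideal.exists_le_maximal J hJtop
  obtain ⟨C, hC⟩ : P ∣ J := Ideal.dvd_iff_le.mpr hle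
  have hnormPC : Ideal.absNorm P * Ideal.absNorm C = p ^ 2 := by
    rw [← _root_.map_mul Ideal.absNorm, ← hC, hJnorm]
  have hPne1 : Ideal.absNorm P ≠ 1 := fun h =>
    hPmax.ne_top (Ideal.absNorm_eq_one_iff.mp h)
  have hPdvd : Ideal.absNorm P ∣ p ^ 2 := ⟨Ideal.absNorm C, hnormPC.symm⟩
  obtain ⟨m, hm2, hPm⟩ := (Nat.dvd_prime_pow hp).mp hPdvd
  have hm0 : m ≠ 0 := fun h => hPne1 (by rw [hPm, h, pow_zero])
  have hPbot : P ≠ ⊥ := by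
    intro h
    rw [h, Ideal.absNorm_bot] at hPm
    exact hp.pos.ne' ((pow_eq_zero_iff hm0).mp hPm.symm)
  have hPprime : Prime P := Ideal.prime_of_isPrime hPbot hPmax.isPrime
  interval_cases m
  · exact absurd rfl hm0
  · -- m = 1 : absNorm P = p
    rw [pow_one] at hPm
    have h' : p * Ideal.absNorm C = p ^ 2 := hPm ▸ hnormPC
    have hCnorm : Ideal.absNorm C = p :=
      Nat.eq_of_mul_eq_mul_left hp.pos (by rw [h', pow_two])
    have hCtop : C ≠ ⊤ := fun h => by
      rw [h, Ideal.absNorm_top] at hCnorm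
      exact hp.one_lt.ne' hCnorm.symm
    obtain ⟨Q, hQmax, hleQ⟩ := Ideal.exists_le_maximal C hCtop
    obtain ⟨D, hD⟩ : Q ∣ C := Ideal.dvd_iff_le.mpr hleQ
    have hnormQD : Ideal.absNorm Q * Ideal.absNorm D = p := by
      rw [← _root_.map_mul Ideal.absNorm, ← hD, hCnorm]
    have hQne1 : Ideal.absNorm Q ≠ 1 := fun h =>
      hQmax.ne_top (Ideal.absNorm_eq_one_iff.mp h)
    have hQnorm : Ideal.absNorm Q = p :=
      ((hp.eq_one_or_self_of_dvd _ ⟨Ideal.absNorm D, hnormQD.symm⟩).resolve_left hQne1)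
    have h'' : p * Ideal.absNorm D = p := hQnorm ▸ hnormQD
    have hDnorm : Ideal.absNorm D = 1 :=
      Nat.eq_of_mul_eq_mul_left hp.pos (by rw [h'', mul_one])
    have hDtop : D = ⊤ := Ideal.absNorm_eq_one_iff.mp hDnorm
    have hCQ : C = Q := by rw [hD, hDtop, mul_top]
    have hQbot : Q ≠ ⊥ := by
      intro h
      rw [h, Ideal.absNorm_bot] at hQnorm
      exact hp.pos.ne' hQnorm.symm
    have hQprime : Prime Q := Ideal.prime_of_isPrime hQbot hQmax.isPrime
    by_cases hPQ : P = Q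
    · right; left
      exact ⟨P, hPprime, by rw [hC, hCQ, ← hPQ, pow_two], hPm⟩
    · left
      exact ⟨P, Q, hPprime, hQprime, hPQ, by rw [hC, hCQ], hPm, hQnorm⟩
  · -- m = 2 : absNorm P = p ^ 2, inert
    have h2 : p ^ 2 * Ideal.absNorm C = p ^ 2 := hPm ▸ hnormPC
    have hCnorm : Ideal.absNorm C = 1 :=
      Nat.eq_of_mul_eq_mul_left (pow_pos hp.pos 2) (by rw [h2, mul_one])
    have hCtop : C = ⊤ := Ideal.absNorm_eq_one_iff.mp hCnorm
    have hJP : J = P := by rw [hC, hCtop, mul_top]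
    right; right
    refine ⟨hJP ▸ hPmax.isPrime, hJP ▸ hPprime, hJnorm⟩


end QuadCharCount

open QuadCharCount Ideal ArithmeticFunction in
open scoped ArithmeticFunction.zeta in
/-- For a quadratic number field `K` and a completely multiplicative
function `χ : ℕ → ℤ` with `χ(p) = 1, 0, -1` according as the prime `p` is split,
ramified, or inert in `K`, the number `ρ(N)` of nonzero ideals of `O_K` of absolute
norm `N` is finite and equals `Σ_{d ∣ N} χ(d)`. -/
theorem card_ideals_of_norm_eq_sum_quadratic_character
    (K : Type*) [Field K] [NumberField K] (hdeg : Module.finrank ℚ K = 2)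
    (χ : ℕ → ℤ) (hχ1 : χ 1 = 1) (hχmul : ∀ m n : ℕ, χ (m * n) = χ m * χ n)
    (hsplit : ∀ p : ℕ, p.Prime →
      (∃ P Q : Ideal (𝓞 K), P.IsPrime ∧ Q.IsPrime ∧ P ≠ Q ∧
        Ideal.span {(p : 𝓞 K)} = P * Q) → χ p = 1)
    (hram : ∀ p : ℕ, p.Prime →
      (∃ P : Ideal (𝓞 K), P.IsPrime ∧ Ideal.span {(p : 𝓞 K)} = P ^ 2) → χ p = 0)
    (hinert : ∀ p : ℕ, p.Prime →
      (Ideal.span {(p : 𝓞 K)}).IsPrime → χ p = -1)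
    (N : ℕ) (hN : 0 < N) :
    {I : Ideal (𝓞 K) | I ≠ ⊥ ∧ Ideal.absNorm I = N}.Finite ∧
      (({I : Ideal (𝓞 K) | I ≠ ⊥ ∧ Ideal.absNorm I = N}.ncard : ℤ) =
        ∑ d ∈ N.divisors, χ d) := by
  classical
  have hsetEq : {I : Ideal (𝓞 K) | I ≠ ⊥ ∧ Ideal.absNorm I = N}
      = {I : Ideal (𝓞 K) | Ideal.absNorm I = N} := by
    ext I
    simp only [Set.mem_setOf_eq, and_iff_right_iff_imp]
    intro h hbot
    rw [hbot, Ideal.absNorm_bot] at h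
    omega
  refine ⟨hsetEq ▸ Ideal.finite_setOf_absNorm_eq N, ?_⟩
  rw [hsetEq]
  have hχpow : ∀ x i : ℕ, χ (x ^ i) = χ x ^ i := by
    intro x i
    induction i with
    | zero => simpa using hχ1
    | succ i ih => rw [pow_succ, hχmul, ih, pow_succ]
  set ρ : ArithmeticFunction ℤ :=
    ⟨fun n => if n = 0 then 0 else ({I : Ideal (𝓞 K) | Ideal.absNorm I = n}.ncard : ℤ),
      by simp⟩ with hρdef
  set χ' : ArithmeticFunction ℤ := ⟨fun n => if n = 0 then 0 else χ n, by simp⟩ with hχ'def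
  have hρ_apply : ∀ n : ℕ, n ≠ 0 →
      ρ n = ({I : Ideal (𝓞 K) | Ideal.absNorm I = n}.ncard : ℤ) := by
    intro n hn
    simp [hρdef, hn]
  have hχ'_apply : ∀ n : ℕ, n ≠ 0 → χ' n = χ n := by
    intro n hn
    simp [hχ'def, hn]
  have hρmult : ρ.IsMultiplicative := by
    constructor
    · have h1 : {I : Ideal (𝓞 K) | Ideal.absNorm I = 1} = {(⊤ : Ideal (𝓞 K))} := by
        ext I
        simp [Ideal.absNorm_eq_one_iff]
      rw [hρ_apply 1 one_ne_zero, h1, Set.ncard_singleton]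
      norm_num
    · intro m n hmn
      rcases Nat.eq_zero_or_pos m with hm | hm
      · subst hm; simp [hρdef]
      rcases Nat.eq_zero_or_pos n with hn | hn
      · subst hn; simp [hρdef]
      rw [hρ_apply _ (by positivity), hρ_apply _ hm.ne', hρ_apply _ hn.ne',
        auxQ_ncard_mul hmn hm hn]
      push_cast
      ring
  have hχ'mult : χ'.IsMultiplicative := by
    constructor
    · rw [hχ'_apply 1 one_ne_zero, hχ1]
    · intro m n _
      rcases Nat.eq_zero_or_pos m with hm | hm
      · subst hm; simp [hχ'def]
      rcases Nat.eq_zero_or_pos n with hn | hn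
      · subst hn; simp [hχ'def]
      rw [hχ'_apply _ (by positivity), hχ'_apply _ hm.ne', hχ'_apply _ hn.ne', hχmul]
  have hζχmult : ((ζ : ArithmeticFunction ℤ) * χ').IsMultiplicative :=
    (isMultiplicative_zeta.natCast).mul hχ'mult
  have hRHSpp : ∀ (p i : ℕ), p.Prime →
      ((ζ : ArithmeticFunction ℤ) * χ') (p ^ i) = ∑ j ∈ Finset.range (i + 1), (χ p) ^ j := by
    intro p i hp
    rw [coe_zeta_mul_apply, Nat.sum_divisors_prime_pow hp]
    refine Finset.sum_congr rfl fun j _ => ?_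
    rw [hχ'_apply _ (pow_ne_zero j hp.pos.ne'), hχpow]
  have key : ρ = (ζ : ArithmeticFunction ℤ) * χ' := by
    rw [ArithmeticFunction.IsMultiplicative.eq_iff_eq_on_prime_powers ρ hρmult _ hζχmult]
    intro p i hp
    rw [hRHSpp p i hp, hρ_apply _ (pow_ne_zero i hp.pos.ne')]
    rcases auxQ_trichotomy hdeg hp with
      ⟨P, Q, hP, hQ, hPQ, hfact, hnP, hnQ⟩ | ⟨P, hP, hfact, hnP⟩ | ⟨hiP, hiPr, hiN⟩
    · have hχp : χ p = 1 := hsplit p hp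
        ⟨P, Q, Ideal.isPrime_of_prime hP, Ideal.isPrime_of_prime hQ, hPQ, hfact⟩
      rw [auxQ_count_split hp hP hQ hPQ hfact hnP hnQ i, hχp]
      simp
    · have hχp : χ p = 0 := hram p hp ⟨P, Ideal.isPrime_of_prime hP, hfact⟩
      rw [auxQ_count_one hp hP hfact (by rw [pow_one]; exact hnP) one_pos i,
        if_pos (one_dvd i), hχp]
      rw [Finset.sum_eq_single 0]
      · simp
      · intro j _ hj
        exact zero_pow hj
      · intro h
        exact absurd (Finset.mem_range.mpr (Nat.succ_pos i)) h
    · have hχp : χ p = -1 := hinert p hp hiP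
      rw [auxQ_count_one hp hiPr (pow_one _).symm hiN two_pos i, hχp, neg_one_geom_sum]
      by_cases h2 : 2 ∣ i
      · rw [if_pos h2, if_neg (by rw [Nat.even_add_one]; exact fun h => h ((even_iff_two_dvd).mpr h2))]
        norm_num
      · rw [if_neg h2, if_pos (by rw [Nat.even_add_one]; exact fun h => h2 ((even_iff_two_dvd).mp h))]
        norm_num
  calc ({I : Ideal (𝓞 K) | Ideal.absNorm I = N}.ncard : ℤ)
      = ρ N := (hρ_apply N hN.ne').symm
    _ = ((ζ : ArithmeticFunction ℤ) * χ') N := by rw [key]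
    _ = ∑ d ∈ N.divisors, χ' d := coe_zeta_mul_apply
    _ = ∑ d ∈ N.divisors, χ d :=
        Finset.sum_congr rfl fun d hd => hχ'_apply d (Nat.pos_of_mem_divisors hd).ne'
end

section
/- Let M be an additive commutative group, F : ℕ → M a function (regarded as the coefficient sequence of a formal q-expansion), and D a squarefree positive integer with set of prime divisors P. For each nonempty subset I ⊆ P, let Φ_I(F) denote the result of applying the operators φ_p for p ∈ I successively to F (the order is immaterial since the φ_p commute pairwise for distinct primes). Then for every positive integer m: 2·F(m) + Σ_{∅ ≠ I ⊆ P} Φ_I(F)(m) = F(m) + F(m / gcd(m, D)). -/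
/-- The operator `φ_d = B_d ∘ (1 - U_d)` on coefficient sequences of formal
`q`-expansions: `φ_d(F)(n) = F(n/d) - F(n)` if `d ∣ n`, and `0` otherwise. -/
def phiOp {M : Type*} [AddCommGroup M] (d : ℕ) (F : ℕ → M) : ℕ → M :=
  fun n => if d ∣ n then F (n / d) - F n else 0

/-- `Φ_I`: the result of applying the operators `φ_p` for `p ∈ I` successively
(in increasing order of `p`; the order is immaterial since the `φ_p` commute
pairwise for distinct primes `p`). -/
def PhiSet {M : Type*} [AddCommGroup M] (I : Finset ℕ) (F : ℕ → M) : ℕ → M :=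
  (I.sort (· ≤ ·)).foldr (fun d G => phiOp d G) F

lemma phiOp_comm {M : Type*} [AddCommGroup M] {a b : ℕ} (h : Nat.Coprime a b) (F : ℕ → M) :
    phiOp a (phiOp b F) = phiOp b (phiOp a F) := by
  funext n
  simp only [phiOp]
  by_cases ha : a ∣ n <;> by_cases hb : b ∣ n
  · have hab : a * b ∣ n := Nat.Coprime.mul_dvd_of_dvd_of_dvd h ha hb
    have h1 : b ∣ n / a := (Nat.dvd_div_iff_mul_dvd ha).mpr hab
    have h2 : a ∣ n / b := (Nat.dvd_div_iff_mul_dvd hb).mpr (by rwa [mul_comm])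
    simp only [if_pos ha, if_pos hb, if_pos h1, if_pos h2,
      Nat.div_div_eq_div_mul]
    rw [mul_comm b a]
    abel
  · have h1 : ¬ b ∣ n / a := fun hd => hb (hd.trans (Nat.div_dvd_of_dvd ha))
    simp [ha, hb, h1]
  · have h2 : ¬ a ∣ n / b := fun hd => ha (hd.trans (Nat.div_dvd_of_dvd hb))
    simp [ha, hb, h2]
  · simp [ha, hb]

lemma PhiSet_insert {M : Type*} [AddCommGroup M] {p : ℕ} {I : Finset ℕ} (hp : p ∉ I)
    (hc : ∀ x ∈ insert p I, ∀ y ∈ insert p I, x ≠ y → Nat.Coprime x y)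
    (F : ℕ → M) : PhiSet (insert p I) F = PhiSet I (phiOp p F) := by
  unfold PhiSet
  have hperm : List.Perm ((insert p I).sort (· ≤ ·)) (I.sort (· ≤ ·) ++ [p]) := by
    refine ((insert p I).sort_perm_toList (· ≤ ·)).trans ?_
    refine (Finset.toList_insert hp).trans ?_
    refine (List.Perm.trans ?_ (List.perm_append_singleton p _).symm)
    exact List.Perm.cons p (I.sort_perm_toList (· ≤ ·)).symm
  have hcomm : ∀ x ∈ (insert p I).sort (· ≤ ·), ∀ y ∈ (insert p I).sort (· ≤ ·),
      ∀ z : ℕ → M, phiOp y (phiOp x z) = phiOp x (phiOp y z) := by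
    intro x hx y hy z
    rw [Finset.mem_sort] at hx hy
    by_cases hxy : x = y
    · subst hxy; rfl
    · exact phiOp_comm (hc y hy x hx (Ne.symm hxy)) z
  rw [List.Perm.foldr_eq' hperm hcomm F, List.foldr_append]
  rfl

lemma step_lemma {M : Type*} [AddCommGroup M] (F : ℕ → M) {p Q m : ℕ}
    (hp : p.Prime) (hcop : Nat.Coprime p Q) :
    F (m / Nat.gcd m Q) + phiOp p F (m / Nat.gcd m Q) = F (m / Nat.gcd m (p * Q)) := by
  set g := Nat.gcd m Q with hg
  have hgm : g ∣ m := Nat.gcd_dvd_left m Q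
  have hgQ : g ∣ Q := Nat.gcd_dvd_right m Q
  by_cases hpd : p ∣ m / g
  · have hgpm : g * p ∣ m := (Nat.dvd_div_iff_mul_dvd hgm).mp hpd
    have hpm : p ∣ m := (dvd_mul_left p g).trans hgpm
    have hkey : Nat.gcd m (p * Q) = p * g := by
      apply Nat.dvd_antisymm
      · have h1 : Nat.gcd m (p * Q) ∣ Nat.gcd m p * Nat.gcd m Q :=
          Nat.gcd_mul_right_dvd_mul_gcd m p Q
        rwa [Nat.gcd_eq_right hpm] at h1
      · exact Nat.dvd_gcd (by rwa [mul_comm] at hgpm) (mul_dvd_mul_left p hgQ)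
    rw [hkey]
    simp only [phiOp, if_pos hpd, Nat.div_div_eq_div_mul]
    rw [mul_comm g p]
    abel
  · have hpm : ¬ p ∣ m := by
      intro hpm
      have hcg : Nat.Coprime p g := Nat.Coprime.coprime_dvd_right hgQ hcop
      have : p ∣ g * (m / g) := by rwa [Nat.mul_div_cancel' hgm]
      exact hpd (hcg.dvd_of_dvd_mul_left this)
    have hcm : Nat.Coprime p m := (Nat.Prime.coprime_iff_not_dvd hp).mpr hpm
    have hkey : Nat.gcd m (p * Q) = Nat.gcd m Q :=
      Nat.Coprime.gcd_mul_left_cancel_right Q hcm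
    rw [hkey]
    simp [phiOp, hpd]
    rfl

lemma sum_powerset_PhiSet {M : Type*} [AddCommGroup M] (P : Finset ℕ)
    (hP : ∀ p ∈ P, Nat.Prime p) (F : ℕ → M) (m : ℕ) :
    ∑ I ∈ P.powerset, PhiSet I F m = F (m / Nat.gcd m (∏ p ∈ P, p)) := by
  induction P using Finset.induction generalizing F with
  | empty => simp [PhiSet]
  | @insert a s ha ih =>
    have hprimes : ∀ p ∈ s, Nat.Prime p := fun p hps => hP p (Finset.mem_insert_of_mem hps)
    have hap : Nat.Prime a := hP a (Finset.mem_insert_self a s)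
    have hdisj : Disjoint s.powerset (s.powerset.image (insert a)) := by
      rw [Finset.disjoint_left]
      intro I hI hI'
      rw [Finset.mem_image] at hI'
      obtain ⟨J, _, hJ⟩ := hI'
      rw [Finset.mem_powerset] at hI
      exact ha (hI (hJ ▸ Finset.mem_insert_self a J))
    have hinj : ∀ x ∈ s.powerset, ∀ y ∈ s.powerset, insert a x = insert a y → x = y := by
      intro x hx y hy hxy
      rw [Finset.mem_powerset] at hx hy
      have hax : a ∉ x := fun h => ha (hx h)
      have hay : a ∉ y := fun h => ha (hy h)
      rw [← Finset.erase_insert hax, hxy, Finset.erase_insert hay]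
    rw [Finset.powerset_insert, Finset.sum_union hdisj, Finset.sum_image hinj]
    have hrw : ∀ I ∈ s.powerset, PhiSet (insert a I) F m = PhiSet I (phiOp a F) m := by
      intro I hI
      rw [Finset.mem_powerset] at hI
      have haI : a ∉ I := fun h => ha (hI h)
      rw [PhiSet_insert haI]
      intro x hx y hy hxy
      have hx' : x ∈ insert a s := by
        rcases Finset.mem_insert.mp hx with h | h
        · exact h ▸ Finset.mem_insert_self a s
        · exact Finset.mem_insert_of_mem (hI h)
      have hy' : y ∈ insert a s := by
        rcases Finset.mem_insert.mp hy with h | h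
        · exact h ▸ Finset.mem_insert_self a s
        · exact Finset.mem_insert_of_mem (hI h)
      exact (Nat.coprime_primes (hP x hx') (hP y hy')).mpr hxy
    rw [Finset.sum_congr rfl hrw, ih hprimes F, ih hprimes (phiOp a F),
      Finset.prod_insert ha]
    have hcop : Nat.Coprime a (∏ p ∈ s, p) := by
      apply Nat.Coprime.prod_right
      intro q hq
      exact (Nat.coprime_primes hap (hprimes q hq)).mpr (fun h => ha (h ▸ hq))
    exact step_lemma F hap hcop

/-- For a squarefree positive integer `D` with set of prime
divisors `P` and any coefficient sequence `F`, for every `m > 0`: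
`2·F(m) + Σ_{∅ ≠ I ⊆ P} Φ_I(F)(m) = F(m) + F(m / gcd(m, D))`. -/
theorem two_smul_add_sum_PhiSet_eq
    {M : Type*} [AddCommGroup M] (F : ℕ → M)
    (D : ℕ) (hD : 0 < D) (hsf : Squarefree D)
    (m : ℕ) (hm : 0 < m) :
    2 • F m + ∑ I ∈ D.primeFactors.powerset.erase ∅, PhiSet I F m =
      F m + F (m / Nat.gcd m D) := by
  have hmem : ∅ ∈ D.primeFactors.powerset := Finset.mem_powerset.mpr (Finset.empty_subset _)
  have hsum := Finset.add_sum_erase _ (fun I => PhiSet I F m) hmem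
  have hkey := sum_powerset_PhiSet D.primeFactors
    (fun p hp => Nat.prime_of_mem_primeFactors hp) F m
  rw [Nat.prod_primeFactors_of_squarefree hsf] at hkey
  have hempty : PhiSet ∅ F m = F m := by simp [PhiSet]
  rw [hempty] at hsum
  rw [← hkey, ← hsum, two_smul]
  abel
end
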